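/- Define I_n(b) = b ∫_0^∞ sinc(b t) · ∏_{k=0}^n sinc(t/(2k+1)) dt for real b ≥ 1 and natural numbers n. Then I_0(1) = π/2, and I_n(1) < π/2 for every n ≥ 1. -/

import Mathlib

open MeasureTheory Filter Real Finset

noncomputable def _root_.sinc (t : ℝ) : ℝ := if t = 0 then 1 else Real.sin t / t

lemma sinc_zero : _root_.sinc 0 = 1 := if_pos rfl

lemma sinc_of_ne {t : ℝ} (ht : t ≠ 0) : _root_.sinc t = Real.sin t / t := if_neg ht

lemma sinc_neg (t : ℝ) : _root_.sinc (-t) = _root_.sinc t := by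
  rcases eq_or_ne t 0 with rfl | ht
  · simp
  · rw [sinc_of_ne (neg_ne_zero.2 ht), sinc_of_ne ht, Real.sin_neg, neg_div_neg_eq]

lemma abs_sinc_le_one (t : ℝ) : |_root_.sinc t| ≤ 1 := by
  rcases eq_or_ne t 0 with rfl | ht
  · simp [_root_.sinc_zero]
  · rw [sinc_of_ne ht, abs_div]
    exact div_le_one_of_le₀ Real.abs_sin_le_abs (abs_nonneg t)

lemma measurable_sinc : Measurable _root_.sinc := by
  unfold _root_.sinc
  refine Measurable.ite ?_ measurable_const (Real.measurable_sin.div measurable_id)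
  exact measurableSet_eq

lemma continuousAt_sinc {t : ℝ} (ht : t ≠ 0) : ContinuousAt _root_.sinc t := by
  have h : ∀ᶠ s in nhds t, Real.sin s / s = _root_.sinc s := by
    filter_upwards [isOpen_ne.mem_nhds ht] with s hs
    exact (sinc_of_ne hs).symm
  exact ContinuousAt.congr (Real.continuous_sin.continuousAt.div continuousAt_id ht) h

lemma sinc_sq_le (t : ℝ) : _root_.sinc t ^ 2 ≤ 2 * (1 + t ^ 2)⁻¹ := by
  have h1 : (0:ℝ) < 1 + t ^ 2 := by positivity
  have habs : _root_.sinc t ^ 2 ≤ 1 := by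
    have h := _root_.abs_sinc_le_one t
    calc _root_.sinc t ^ 2 = |_root_.sinc t| ^ 2 := (sq_abs _).symm
      _ ≤ 1 := by nlinarith [abs_nonneg (_root_.sinc t)]
  rcases le_total (t ^ 2) 1 with h | h
  · calc _root_.sinc t ^ 2 ≤ 1 := habs
      _ ≤ 2 * (1 + t ^ 2)⁻¹ := by rw [le_mul_inv_iff₀ h1]; linarith
  · have ht : t ≠ 0 := by intro h0; rw [h0] at h; norm_num at h
    have hsin : Real.sin t ^ 2 ≤ 1 := by
      have := Real.neg_one_le_sin t; have := Real.sin_le_one t; nlinarith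
    rw [sinc_of_ne ht, div_pow, div_le_iff₀ (by positivity)]
    calc Real.sin t ^ 2 ≤ 1 := hsin
      _ ≤ 2 * (1 + t ^ 2)⁻¹ * t ^ 2 := by
          rw [mul_right_comm, le_mul_inv_iff₀ h1]; nlinarith

lemma integrable_sinc_sq : Integrable (fun t : ℝ => _root_.sinc t ^ 2) := by
  refine Integrable.mono (integrable_inv_one_add_sq.const_mul 2)
    ((_root_.measurable_sinc.pow_const 2).aestronglyMeasurable) ?_
  refine Filter.Eventually.of_forall fun t => ?_
  rw [Real.norm_eq_abs, Real.norm_eq_abs, abs_of_nonneg (sq_nonneg _)]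
  exact (sinc_sq_le t).trans (le_abs_self _)

open scoped FourierTransform

noncomputable def tri (x : ℝ) : ℂ := ((max (1 - |x|) 0 : ℝ) : ℂ)

lemma continuous_tri : Continuous tri :=
  Complex.continuous_ofReal.comp ((continuous_const.sub continuous_abs).max continuous_const)

lemma tri_eq_zero {x : ℝ} (hx : 1 ≤ |x|) : tri x = 0 := by
  simp only [tri, Complex.ofReal_eq_zero]
  exact max_eq_right (by linarith)

lemma integral_key (θ : ℝ) (hθ : θ ≠ 0) :
    ∫ v in (0:ℝ)..1, (1 - v) * Real.cos (θ * v) = (1 - Real.cos θ) / θ ^ 2 := by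
  have H : ∀ v ∈ Set.uIcc (0:ℝ) 1,
      HasDerivAt (fun v : ℝ => (1 - v) * (Real.sin (θ * v) / θ) - Real.cos (θ * v) / θ ^ 2)
        ((1 - v) * Real.cos (θ * v)) v := by
    intro v _
    have hlin : HasDerivAt (fun v : ℝ => θ * v) θ v := by
      simpa using (hasDerivAt_id v).const_mul θ
    have hs : HasDerivAt (fun v : ℝ => Real.sin (θ * v)) (Real.cos (θ * v) * θ) v :=
      (Real.hasDerivAt_sin (θ * v)).comp v hlin
    have hc : HasDerivAt (fun v : ℝ => Real.cos (θ * v)) (-Real.sin (θ * v) * θ) v :=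
      (Real.hasDerivAt_cos (θ * v)).comp v hlin
    have h1 : HasDerivAt (fun v : ℝ => (1 - v) * (Real.sin (θ * v) / θ))
        ((0 - 1) * (Real.sin (θ * v) / θ) + (1 - v) * (Real.cos (θ * v) * θ / θ)) v :=
      ((hasDerivAt_const v (1:ℝ)).sub (hasDerivAt_id v)).mul (hs.div_const θ)
    have h2 := h1.fun_sub ((hc.div_const (θ ^ 2)))
    convert h2 using 1
    · rfl
    · rfl
    field_simp
    ring
  rw [intervalIntegral.integral_eq_sub_of_hasDerivAt H (by
    apply Continuous.intervalIntegrable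
    exact (continuous_const.sub continuous_id).mul (Real.continuous_cos.comp (continuous_const.mul continuous_id)))]
  simp [Real.sin_zero, Real.cos_zero]
  field_simp
  ring

lemma exp_add_exp_neg (θ : ℝ) :
    Complex.exp (↑θ * Complex.I) + Complex.exp (↑(-θ) * Complex.I) = ((2 * Real.cos θ : ℝ) : ℂ) := by
  rw [Complex.exp_mul_I, Complex.exp_mul_I]
  push_cast
  rw [Complex.cos_neg, Complex.sin_neg]
  ring

lemma fourier_tri (w : ℝ) : 𝓕 tri w = ((_root_.sinc (π * w)) ^ 2 : ℝ) := by
  rw [Real.fourier_real_eq_integral_exp_smul]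
  set f : ℝ → ℂ := fun v => Complex.exp (↑(-2 * π * v * w) * Complex.I) • tri v with hf
  have hfc : Continuous f := by
    apply Continuous.fun_smul _ continuous_tri
    exact Complex.continuous_exp.comp ((Complex.continuous_ofReal.comp (by continuity)).mul continuous_const)
  have h1 : ∫ v : ℝ, f v = ∫ v in Set.Ioc (-1:ℝ) 1, f v := by
    refine (setIntegral_eq_integral_of_forall_compl_eq_zero fun x hx => ?_).symm
    have : 1 ≤ |x| := by
      simp only [Set.mem_Ioc, not_and_or, not_lt, not_le] at hx
      rcases hx with h | h
      · rw [abs_of_nonpos (by linarith)]; linarith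
      · rw [abs_of_pos (by linarith)]; linarith
    simp [hf, tri_eq_zero this]
  have h2 : ∫ v in Set.Ioc (-1:ℝ) 1, f v = ∫ v in (-1:ℝ)..1, f v :=
    (intervalIntegral.integral_of_le (by norm_num)).symm
  have h3 : ∫ v in (-1:ℝ)..1, f v = (∫ v in (-1:ℝ)..0, f v) + ∫ v in (0:ℝ)..1, f v :=
    (intervalIntegral.integral_add_adjacent_intervals
      (hfc.intervalIntegrable _ _) (hfc.intervalIntegrable _ _)).symm
  have h4 : ∫ v in (-1:ℝ)..0, f v = ∫ v in (0:ℝ)..1, f (-v) := by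
    rw [intervalIntegral.integral_comp_neg]
    norm_num
  have h5 : (∫ v in (0:ℝ)..1, f (-v)) + ∫ v in (0:ℝ)..1, f v
      = ∫ v in (0:ℝ)..1, (f (-v) + f v) :=
    (intervalIntegral.integral_add ((hfc.comp continuous_neg).intervalIntegrable _ _)
      (hfc.intervalIntegrable _ _)).symm
  have h6 : ∫ v in (0:ℝ)..1, (f (-v) + f v)
      = ∫ v in (0:ℝ)..1, ((2 * Real.cos (2 * π * w * v) * (1 - v) : ℝ) : ℂ) := by
    apply intervalIntegral.integral_congr
    intro v hv
    rw [Set.uIcc_of_le (by norm_num : (0:ℝ) ≤ 1)] at hv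
    obtain ⟨hv0, hv1⟩ := hv
    have htri : tri v = ((1 - v : ℝ) : ℂ) := by
      simp only [tri, abs_of_nonneg hv0]
      norm_cast
      exact max_eq_left (by linarith)
    have htri' : tri (-v) = ((1 - v : ℝ) : ℂ) := by
      simp only [tri, abs_neg, abs_of_nonneg hv0]
      norm_cast
      exact max_eq_left (by linarith)
    simp only [hf, smul_eq_mul, htri, htri']
    have : (-2) * π * (-v) * w = 2 * π * w * v := by ring
    rw [this]
    have : (-2) * π * v * w = -(2 * π * w * v) := by ring
    rw [this, ← add_mul, exp_add_exp_neg (2 * π * w * v)]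
    push_cast
    ring
  have h7 : ∫ v in (0:ℝ)..1, ((2 * Real.cos (2 * π * w * v) * (1 - v) : ℝ) : ℂ)
      = ((∫ v in (0:ℝ)..1, 2 * Real.cos (2 * π * w * v) * (1 - v) : ℝ) : ℂ) :=
    intervalIntegral.integral_ofReal
  rw [h1, h2, h3, h4, h5, h6, h7]
  norm_cast
  rcases eq_or_ne w 0 with rfl | hw
  · simp only [mul_zero, zero_mul, Real.cos_zero, mul_one, _root_.sinc_zero, one_pow]
    rw [intervalIntegral.integral_const_mul]
    have : ∫ x in (0:ℝ)..1, (1 - x) = 1 - 1 ^ 2 / 2 := by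
      rw [intervalIntegral.integral_sub intervalIntegrable_const
        (intervalIntegral.intervalIntegrable_id), integral_id, intervalIntegral.integral_const]
      norm_num
    rw [this]; norm_num
  · have hpw : π * w ≠ 0 := mul_ne_zero Real.pi_ne_zero hw
    have hθ : 2 * π * w ≠ 0 := by
      intro h; apply hpw; linarith [h]
    have heq : ∀ v : ℝ, 2 * Real.cos (2 * π * w * v) * (1 - v)
        = 2 * ((1 - v) * Real.cos ((2 * π * w) * v)) := by intro v; ring
    rw [intervalIntegral.integral_congr (fun v _ => heq v),
      intervalIntegral.integral_const_mul, integral_key _ hθ, sinc_of_ne hpw]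
    have hcos : Real.cos (2 * π * w) = 2 * Real.cos (π * w) ^ 2 - 1 := by
      rw [show 2 * π * w = 2 * (π * w) by ring, Real.cos_two_mul]
    have hpyth := Real.sin_sq_add_cos_sq (π * w)
    rw [hcos]
    field_simp
    ring_nf
    nlinarith [sq_nonneg (π * w)]

lemma integrable_tri : Integrable tri := by
  apply Continuous.integrable_of_hasCompactSupport continuous_tri
  apply HasCompactSupport.intro (isCompact_Icc : IsCompact (Set.Icc (-1:ℝ) 1))
  intro x hx
  apply tri_eq_zero
  simp only [Set.mem_Icc, not_and_or, not_le] at hx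
  rcases hx with h | h
  · rw [abs_of_nonpos (by linarith)]; linarith
  · rw [abs_of_pos (by linarith)]; linarith

lemma integral_sinc_sq_pi_mul : ∫ v : ℝ, _root_.sinc (π * v) ^ 2 = 1 := by
  have hft : (𝓕 tri) = fun w => ((_root_.sinc (π * w) ^ 2 : ℝ) : ℂ) := funext fourier_tri
  have hint2 : Integrable (𝓕 tri) := by
    rw [hft]
    exact (integrable_sinc_sq.comp_mul_left' Real.pi_ne_zero).ofReal
  have hinv := integrable_tri.fourierInv_fourier_eq hint2 (continuous_tri.continuousAt (x := 0))
  rw [Real.fourierInv_eq_fourier_neg, neg_zero,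
    Real.fourier_real_eq_integral_exp_smul] at hinv
  simp only [mul_zero, Complex.ofReal_zero, zero_mul, Complex.exp_zero, one_smul] at hinv
  rw [hft] at hinv
  simp only [] at hinv
  rw [show (∫ (v : ℝ), (fun w => ((_root_.sinc (π * w) ^ 2 : ℝ) : ℂ)) v) = ((∫ (v : ℝ), _root_.sinc (π * v) ^ 2 : ℝ) : ℂ) from integral_ofReal] at hinv
  have htri0 : tri 0 = 1 := by simp [tri]
  rw [htri0] at hinv
  exact_mod_cast hinv

lemma integral_line_sinc_sq : ∫ t : ℝ, _root_.sinc t ^ 2 = π := by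
  have h2 := MeasureTheory.Measure.integral_comp_mul_left (fun t => _root_.sinc t ^ 2) π
  rw [integral_sinc_sq_pi_mul] at h2
  rw [abs_of_pos (inv_pos.2 Real.pi_pos), smul_eq_mul] at h2
  field_simp at h2
  linarith [h2]

lemma integral_Ioi_sinc_sq : ∫ t in Set.Ioi (0:ℝ), _root_.sinc t ^ 2 = π / 2 := by
  have hsplit := intervalIntegral.integral_Iic_add_Ioi (b := (0:ℝ))
    (integrable_sinc_sq.integrableOn) (integrable_sinc_sq.integrableOn)
  have heven : ∫ t in Set.Iic (0:ℝ), _root_.sinc t ^ 2 = ∫ t in Set.Ioi (0:ℝ), _root_.sinc t ^ 2 := by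
    have h := integral_comp_neg_Iic (0:ℝ) (fun t => _root_.sinc t ^ 2)
    simp only [_root_.sinc_neg, neg_zero] at h
    exact h
  rw [integral_line_sinc_sq] at hsplit
  rw [heven] at hsplit
  linarith

/-- With `I_n(b) = b ∫_0^∞ _root_.sinc(bt) ∏_{k=0}^n _root_.sinc(t/(2k+1)) dt`:
`I_n(1) = π/2` for `n ≤ 0`, and `I_n(1) < π/2` for `n ≥ 0 + 1`. -/
theorem I_one_values :
    (∀ n : ℕ, n ≤ 0 →
      Filter.Tendsto
        (fun R : ℝ => (1 : ℝ) * ∫ t in (0:ℝ)..R,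
          _root_.sinc ((1 : ℝ) * t) * ∏ k ∈ Finset.range (n + 1), _root_.sinc (t / (2 * (k : ℝ) + 1)))
        Filter.atTop (nhds (π / 2))) ∧
    (∀ n : ℕ, 0 + 1 ≤ n → ∀ I : ℝ,
      Filter.Tendsto
        (fun R : ℝ => (1 : ℝ) * ∫ t in (0:ℝ)..R,
          _root_.sinc ((1 : ℝ) * t) * ∏ k ∈ Finset.range (n + 1), _root_.sinc (t / (2 * (k : ℝ) + 1)))
        Filter.atTop (nhds I) →
      I < π / 2) := by
  constructor
  · intro n hn
    obtain rfl : n = 0 := Nat.le_zero.mp hn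
    have key : (fun R : ℝ => (1:ℝ) * ∫ t in (0:ℝ)..R,
        _root_.sinc ((1:ℝ)*t) * ∏ k ∈ Finset.range (0+1), _root_.sinc (t / (2*(k:ℝ)+1)))
        = fun R : ℝ => ∫ t in (0:ℝ)..R, _root_.sinc t ^ 2 := by
      funext R
      simp only [one_mul, Finset.prod_range_one, Nat.cast_zero, mul_zero, zero_add, div_one,
        ← pow_two]
    rw [key]
    have h := MeasureTheory.intervalIntegral_tendsto_integral_Ioi (μ := volume) 0
      integrable_sinc_sq.integrableOn tendsto_id
    rwa [integral_Ioi_sinc_sq] at h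
  · intro n hn I hI
    simp only [one_mul] at hI
    set F : ℝ → ℝ := fun t => _root_.sinc t * ∏ k ∈ Finset.range (n+1), _root_.sinc (t / (2*(k:ℝ)+1)) with hF
    set P : ℝ → ℝ := fun t => ∏ k ∈ Finset.range n, _root_.sinc (t / (2*((k:ℝ)+1)+1)) with hP
    have hFP : ∀ t, F t = _root_.sinc t ^ 2 * P t := by
      intro t
      simp only [hF, hP]
      rw [Finset.prod_range_succ']
      have h0 : _root_.sinc (t / (2 * ((0:ℕ):ℝ) + 1)) = _root_.sinc t := by norm_num
      rw [h0]
      have h1 : ∀ k : ℕ, _root_.sinc (t / (2 * (((k+1):ℕ):ℝ) + 1)) = _root_.sinc (t / (2*((k:ℝ)+1)+1)) := by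
        intro k; push_cast; ring_nf
      rw [Finset.prod_congr rfl (fun k _ => h1 k)]
      ring
    have habsP : ∀ t, |P t| ≤ 1 := by
      intro t
      rw [hP, Finset.abs_prod]
      exact Finset.prod_le_one (fun k _ => abs_nonneg _) (fun k _ => _root_.abs_sinc_le_one _)
    have hle : ∀ t, F t ≤ _root_.sinc t ^ 2 := by
      intro t
      rw [hFP t]
      calc _root_.sinc t ^ 2 * P t ≤ _root_.sinc t ^ 2 * 1 :=
            mul_le_mul_of_nonneg_left ((le_abs_self _).trans (habsP t)) (sq_nonneg _)
        _ = _root_.sinc t ^ 2 := mul_one _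
    have hFmeas : Measurable F :=
      _root_.measurable_sinc.mul (Finset.measurable_prod _ fun k _ =>
        _root_.measurable_sinc.comp (measurable_id.div_const _))
    have hFint : Integrable F := by
      refine Integrable.mono integrable_sinc_sq hFmeas.aestronglyMeasurable
        (Filter.Eventually.of_forall fun t => ?_)
      rw [Real.norm_eq_abs, Real.norm_eq_abs, hFP t, abs_mul, abs_of_nonneg (sq_nonneg (_root_.sinc t))]
      calc _root_.sinc t ^ 2 * |P t| ≤ _root_.sinc t ^ 2 * 1 :=
            mul_le_mul_of_nonneg_left (habsP t) (sq_nonneg _)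
        _ = _root_.sinc t ^ 2 := mul_one _
    have hlim := MeasureTheory.intervalIntegral_tendsto_integral_Ioi (μ := volume) 0
      hFint.integrableOn tendsto_id
    have hIeq : I = ∫ t in Set.Ioi (0:ℝ), F t := tendsto_nhds_unique hI hlim
    -- strict inequality
    set G : ℝ → ℝ := fun t => _root_.sinc t ^ 2 - F t with hG
    have hGint : Integrable G := integrable_sinc_sq.sub hFint
    have hGpos : 0 < ∫ t in Set.Ioi (0:ℝ), G t := by
      rw [MeasureTheory.setIntegral_pos_iff_support_of_nonneg_ae
        (Filter.Eventually.of_forall fun t => sub_nonneg.2 (hle t)) hGint.integrableOn]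
      -- continuity of G at π/2
      have hhalf : (0:ℝ) < π/2 := by positivity
      have hcF : ContinuousAt F (π/2) := by
        have hprod : Filter.Tendsto (fun t : ℝ => ∏ k ∈ Finset.range (n+1), _root_.sinc (t / (2*(k:ℝ)+1)))
            (nhds (π/2)) (nhds (∏ k ∈ Finset.range (n+1), _root_.sinc ((π/2) / (2*(k:ℝ)+1)))) := by
          refine tendsto_finset_prod _ fun k _ => ?_
          have hk : (0:ℝ) < 2*(k:ℝ)+1 := by positivity
          have hinner : ContinuousAt (fun t : ℝ => t / (2*(k:ℝ)+1)) (π/2) :=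
            continuousAt_id.div_const _
          have houter : ContinuousAt _root_.sinc ((π/2) / (2*(k:ℝ)+1)) :=
            continuousAt_sinc (ne_of_gt (div_pos hhalf hk))
          have houter2 : Filter.Tendsto _root_.sinc (nhds ((π/2) / (2*(k:ℝ)+1)))
              (nhds (_root_.sinc ((π/2) / (2*(k:ℝ)+1)))) := houter
          have hinner2 : Filter.Tendsto (fun t : ℝ => t / (2*(k:ℝ)+1)) (nhds (π/2))
              (nhds ((π/2) / (2*(k:ℝ)+1))) := hinner
          exact houter2.comp hinner2
        exact ContinuousAt.mul (continuousAt_sinc (ne_of_gt hhalf)) hprod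
      have hcG : ContinuousAt G (π/2) :=
        (((continuousAt_sinc (ne_of_gt hhalf)).pow 2).sub hcF)
      -- G (π/2) > 0
      have hsincpos : 0 < _root_.sinc (π/2) := by
        rw [sinc_of_ne (ne_of_gt hhalf), Real.sin_pi_div_two]
        positivity
      have hPlt : P (π/2) < 1 := by
        obtain ⟨m, rfl⟩ : ∃ m, n = m + 1 := ⟨n - 1, (Nat.succ_pred_eq_of_pos hn).symm⟩
        rw [hP]
        simp only []
        rw [Finset.prod_range_succ]
        set c : ℝ := π/2 / (2*((m:ℝ)+1)+1) with hc
        have hcpos : 0 < c := by rw [hc]; positivity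
        have hclt : c < π := by
          rw [hc]
          calc π/2 / (2*((m:ℝ)+1)+1) ≤ π/2 / 1 := by
                apply div_le_div_of_nonneg_left (by positivity) one_pos
                have : (0:ℝ) ≤ (m:ℝ) := Nat.cast_nonneg m
                linarith
            _ = π/2 := div_one _
            _ < π := by linarith [Real.pi_pos]
        have hg1 : _root_.sinc c < 1 := by
          rw [sinc_of_ne (ne_of_gt hcpos), div_lt_one hcpos]
          exact Real.sin_lt hcpos
        have hg0 : 0 < _root_.sinc c := by
          rw [sinc_of_ne (ne_of_gt hcpos)]
          exact div_pos (Real.sin_pos_of_pos_of_lt_pi hcpos hclt) hcpos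
        set Q : ℝ := ∏ k ∈ Finset.range m, _root_.sinc (π/2 / (2*((k:ℝ)+1)+1)) with hQ
        have habsQ : |Q| ≤ 1 := by
          rw [hQ, Finset.abs_prod]
          exact Finset.prod_le_one (fun k _ => abs_nonneg _) (fun k _ => _root_.abs_sinc_le_one _)
        calc Q * _root_.sinc c ≤ |Q| * _root_.sinc c := mul_le_mul_of_nonneg_right (le_abs_self _) hg0.le
          _ ≤ 1 * _root_.sinc c := mul_le_mul_of_nonneg_right habsQ hg0.le
          _ = _root_.sinc c := one_mul _
          _ < 1 := hg1
      have hGval : 0 < G (π/2) := by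
        have : G (π/2) = _root_.sinc (π/2) ^ 2 * (1 - P (π/2)) := by
          rw [hG]; simp only []; rw [hFP]; ring
        rw [this]
        have : 0 < _root_.sinc (π/2) ^ 2 := by positivity
        nlinarith
      have hnb : G ⁻¹' Set.Ioi 0 ∈ nhds (π/2) :=
        hcG.preimage_mem_nhds (Ioi_mem_nhds hGval)
      obtain ⟨ε, hε, hball⟩ := Metric.mem_nhds_iff.mp hnb
      have hsub : Set.Ioo (π/2) (π/2 + ε) ⊆ Function.support G ∩ Set.Ioi 0 := by
        intro x hx
        have hxball : x ∈ Metric.ball (π/2) ε := by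
          rw [Metric.mem_ball, Real.dist_eq, abs_of_pos (by linarith [hx.1, hhalf] : (0:ℝ) < x - π/2)]
          linarith [hx.2]
        exact ⟨ne_of_gt (hball hxball), hhalf.trans hx.1⟩
      calc (0:ENNReal) < volume (Set.Ioo (π/2) (π/2 + ε)) := by
            rw [Real.volume_Ioo]
            simp only [add_sub_cancel_left]
            exact ENNReal.ofReal_pos.mpr hε
        _ ≤ volume (Function.support G ∩ Set.Ioi 0) := measure_mono hsub
    have hsplit : ∫ t in Set.Ioi (0:ℝ), G t
        = π/2 - ∫ t in Set.Ioi (0:ℝ), F t := by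
      rw [hG]
      rw [MeasureTheory.integral_sub integrable_sinc_sq.integrableOn hFint.integrableOn,
        integral_Ioi_sinc_sq]
    rw [hIeq]
    linarith [hGpos, hsplit]
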